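/- arXiv:1710.07836 — 3 statements merged into one kernel-verified Lean document; each statement's English description precedes it below -/
import Mathlib

section
/- Let T be a subdivision of a rooted tree with vertex set V. Then for any nonempty subset U of V, there exists a set of pairwise vertex-disjoint directed paths in T, each of which ends at a leaf of T, such that each vertex in U lies on exactly one of the paths. -/
open Relation

/-- Out-degree of a vertex in a digraph given by its arc relation. -/
noncomputable def outDeg {V : Type*} (A : V → V → Prop) (v : V) : ℕ := {u | A v u}.ncard
/-- In-degree of a vertex in a digraph given by its arc relation. -/
noncomputable def inDeg {V : Type*} (A : V → V → Prop) (v : V) : ℕ := {u | A u v}.ncard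

/-- A rooted phylogenetic network on leaf set `X`. -/
structure PhyloNet (V : Type*) [Fintype V] [DecidableEq V] where
  Arc : V → V → Prop
  root : V
  X : Finset V
  acyclic : ∀ v, ¬ Relation.TransGen Arc v v
  reach : ∀ v, Relation.ReflTransGen Arc root v
  root_out : 1 ≤ outDeg Arc root
  leaf_iff : ∀ v, v ∈ X ↔ outDeg Arc v = 0
  leaf_in : ∀ v ∈ X, inDeg Arc v = 1
  internal : ∀ v, v ≠ root → v ∉ X →
    (inDeg Arc v = 1 ∧ 2 ≤ outDeg Arc v) ∨ (2 ≤ inDeg Arc v ∧ outDeg Arc v = 1)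

section Defs
variable {V : Type*} [Fintype V] [DecidableEq V]

/-- A reticulation: in-degree at least two. -/
def IsRetic (N : PhyloNet V) (v : V) : Prop := 2 ≤ inDeg N.Arc v
/-- A tree vertex: a non-leaf vertex of in-degree at most one. -/
def IsTreeVert (N : PhyloNet V) (v : V) : Prop := v ∉ N.X ∧ inDeg N.Arc v ≤ 1
/-- An omnian: a non-leaf vertex all of whose children are reticulations. -/
def IsOmnian (N : PhyloNet V) (v : V) : Prop := v ∉ N.X ∧ ∀ u, N.Arc v u → IsRetic N u
/-- A binary network: all in- and out-degrees are at most two. -/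
def IsBinary (N : PhyloNet V) : Prop := ∀ v : V, inDeg N.Arc v ≤ 2 ∧ outDeg N.Arc v ≤ 2

/-- A rooted spanning tree of `N` with the same root as `N`. -/
def IsRSTree (N : PhyloNet V) (T : V → V → Prop) : Prop :=
  (∀ u v, T u v → N.Arc u v) ∧ (∀ v, inDeg T v = 0 ↔ v = N.root) ∧
  (∀ v, v ≠ N.root → inDeg T v = 1)

/-- A support tree: a rooted spanning tree with the same root, all of whose leaves are in `X`. -/
def IsSupportTree (N : PhyloNet V) (T : V → V → Prop) : Prop :=
  IsRSTree N T ∧ ∀ v, outDeg T v = 0 → v ∈ N.X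

/-- Tree-based network. -/
def TreeBased (N : PhyloNet V) : Prop := ∃ T, IsSupportTree N T

/-- A (nonempty, repetition-free) directed path recorded as a list of vertices. -/
def IsPathIn (A : V → V → Prop) (p : List V) : Prop := p ≠ [] ∧ p.Chain' A ∧ p.Nodup
/-- The path ends at a vertex of `X`. -/
def EndsIn (X : Finset V) (p : List V) : Prop := ∃ x ∈ X, p.getLast? = some x
/-- Pairwise vertex-disjoint family of paths. -/
def PairwiseDisj (P : Finset (List V)) : Prop :=
  ∀ p ∈ P, ∀ q ∈ P, p ≠ q → ∀ v : V, v ∈ p → v ∉ q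
/-- A partition of the vertex set of `N` into vertex-disjoint directed paths
ending at leaves in `X`. -/
def IsPathPartition (N : PhyloNet V) (P : Finset (List V)) : Prop :=
  (∀ p ∈ P, IsPathIn N.Arc p ∧ EndsIn N.X p) ∧ PairwiseDisj P ∧ ∀ v : V, ∃ p ∈ P, v ∈ p

/-- A matching in the bipartite graph with edge set `E` (edges from a first copy of `V`
to a second copy of `V`), recorded as a set of edges no two of which share an endpoint. -/
def IsMatchingOn (E : V → V → Prop) (M : Finset (V × V)) : Prop :=
  (∀ e ∈ M, E e.1 e.2) ∧ ∀ e ∈ M, ∀ f ∈ M, (e.1 = f.1 ∨ e.2 = f.2) → e = f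

/-- Size of a maximum matching of the bipartite graph with edge set `E`. -/
noncomputable def maxMatching (E : V → V → Prop) : ℕ :=
  sSup {n | ∃ M : Finset (V × V), IsMatchingOn E M ∧ M.card = n}

/-- An antichain of vertices of `N`. -/
def AntichainIn (N : PhyloNet V) (S : Finset V) : Prop :=
  ∀ u ∈ S, ∀ v ∈ S, u ≠ v → ¬ Relation.TransGen N.Arc u v

/-- The antichain-to-leaf property: from every antichain there are pairwise
vertex-disjoint directed paths to leaves, one starting at each antichain element. -/
def AntichainToLeaf (N : PhyloNet V) : Prop :=
  ∀ S : Finset V, AntichainIn N S →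
    ∃ f : V → List V,
      (∀ s ∈ S, IsPathIn N.Arc (f s) ∧ (f s).head? = some s ∧ EndsIn N.X (f s)) ∧
      ∀ s ∈ S, ∀ t ∈ S, s ≠ t → ∀ v : V, v ∈ f s → v ∉ f t

/-- A temporal network: a real labelling strictly increasing along tree arcs and
constant along reticulation arcs. -/
def Temporal (N : PhyloNet V) : Prop :=
  ∃ l : V → ℝ, ∀ u v, N.Arc u v →
    (IsRetic N v → l u = l v) ∧ (¬ IsRetic N v → l u < l v)

/-- `N'` is a binary refinement of `N`, witnessed by the contraction map `φ`:
`N` is obtained from the binary network `N'` by contracting the arcs whose endpoints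
are identified by `φ`. -/
def IsBinRefinement {V' : Type*} [Fintype V'] [DecidableEq V']
    (N' : PhyloNet V') (N : PhyloNet V) (φ : V' → V) : Prop :=
  IsBinary N' ∧ Function.Surjective φ ∧ φ N'.root = N.root ∧
  N'.X.image φ = N.X ∧ Set.InjOn φ ↑N'.X ∧
  (∀ u v : V, N.Arc u v ↔ ∃ u' v', φ u' = u ∧ φ v' = v ∧ N'.Arc u' v' ∧ φ u' ≠ φ v') ∧
  (∀ a b : V', φ a = φ b →
    Relation.ReflTransGen (fun x y => (N'.Arc x y ∨ N'.Arc y x) ∧ φ x = φ y) a b)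

/-- Edge of the bipartite graph `B_N` between omnians and reticulations. -/
def BEdge (N : PhyloNet V) (o r : V) : Prop := IsOmnian N o ∧ IsRetic N r ∧ N.Arc o r
/-- Edge of the bipartite graph `Z_N` between tree vertices with a reticulation child
and reticulations. -/
def ZEdge (N : PhyloNet V) (t r : V) : Prop :=
  IsTreeVert N t ∧ (∃ r', N.Arc t r' ∧ IsRetic N r') ∧ IsRetic N r ∧ N.Arc t r

/-- `R_t`: reticulations with no reticulation parent. -/
def Rt (N : PhyloNet V) (v : V) : Prop := IsRetic N v ∧ ∀ u, N.Arc u v → ¬ IsRetic N u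
/-- `Q_t`: vertices with a child in `R_t`. -/
def Qt (N : PhyloNet V) (v : V) : Prop := ∃ r, N.Arc v r ∧ Rt N r
/-- Edge of the bipartite graph `J_N`. -/
def JEdge (N : PhyloNet V) (q r : V) : Prop := Qt N q ∧ Rt N r ∧ N.Arc q r

/-- A supporting set for `J_N`. -/
def IsSupportingSet (N : PhyloNet V) (E : Finset (V × V)) : Prop :=
  (∀ e ∈ E, JEdge N e.1 e.2) ∧
  (∀ q, Qt N q → IsOmnian N q → ∃ e ∈ E, e.1 = q) ∧
  (∀ r, Rt N r → ∃! e : V × V, e ∈ E ∧ e.2 = r)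

/-- An arboreal arc: `u` is a reticulation, or `v` is a tree vertex or a leaf. -/
def ArborealArc (N : PhyloNet V) (u v : V) : Prop :=
  N.Arc u v ∧ (IsRetic N u ∨ ¬ IsRetic N v)

/-- The number of support trees of `N`, identified with their arc sets. -/
noncomputable def supCount (N : PhyloNet V) : ℕ :=
  {A' : Finset (V × V) | IsSupportTree N (fun u v => (u, v) ∈ A')}.ncard

/-- The bipartite graph `J_N`, as a simple graph on `Q_t ∪ R_t`. -/
def Jgraph (N : PhyloNet V) : SimpleGraph {v : V // Qt N v ∨ Rt N v} where
  Adj a b := JEdge N a.1 b.1 ∨ JEdge N b.1 a.1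
  symm := ⟨by intro a b h; tauto⟩
  loopless := by
    exact ⟨by rintro a (⟨_, _, h⟩ | ⟨_, _, h⟩) <;> exact N.acyclic _ (Relation.TransGen.single h)⟩

/-- Degree in `J_N`. -/
noncomputable def Jdeg (N : PhyloNet V) (a : {v : V // Qt N v ∨ Rt N v}) : ℕ :=
  ((Jgraph N).neighborSet a).ncard

end Defs

/-- A rooted tree (equivalently, a subdivision of a rooted tree): a rooted digraph
in which every non-root vertex has in-degree one and everything is reachable
from the root. -/
structure RootedDirTree (V : Type*) [Fintype V] [DecidableEq V] where
  Arc : V → V → Prop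
  root : V
  acyclic : ∀ v, ¬ Relation.TransGen Arc v v
  reach : ∀ v, Relation.ReflTransGen Arc root v
  root_in : inDeg Arc root = 0
  in_one : ∀ v, v ≠ root → inDeg Arc v = 1

section ProofAux

variable {V : Type*} [Fintype V] [DecidableEq V]

private lemma deg_zero {A : V → V → Prop} {v : V} (h : ∀ u, ¬ A v u) : outDeg A v = 0 := by
  have he : {u | A v u} = ∅ := Set.eq_empty_iff_forall_notMem.2 h
  simp [outDeg, he]

private lemma exists_child {A : V → V → Prop} {v : V} (h : outDeg A v ≠ 0) : ∃ u, A v u := by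
  by_contra hc
  push_neg at hc
  exact h (deg_zero hc)

variable (T : RootedDirTree V)

private lemma no_arc_root {u : V} (h : T.Arc u T.root) : False := by
  have h0 : ({w | T.Arc w T.root} : Set V).ncard = 0 := T.root_in
  have he := (Set.ncard_eq_zero (Set.toFinite _)).1 h0
  exact Set.eq_empty_iff_forall_notMem.1 he u h

private lemma parent_unique {p q v : V} (hp : T.Arc p v) (hq : T.Arc q v) : p = q := by
  have hv : v ≠ T.root := fun h => no_arc_root T (h ▸ hp)
  have h1 : ({w | T.Arc w v} : Set V).ncard = 1 := T.in_one v hv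
  obtain ⟨a, ha⟩ := Set.ncard_eq_one.1 h1
  have hp' : p ∈ ({w | T.Arc w v} : Set V) := hp
  have hq' : q ∈ ({w | T.Arc w v} : Set V) := hq
  rw [ha] at hp' hq'
  simp only [Set.mem_singleton_iff] at hp' hq'
  rw [hp', hq']

private lemma anc_transGen {a b : V} (h : Relation.ReflTransGen T.Arc a b) (hne : a ≠ b) :
    Relation.TransGen T.Arc a b := by
  rcases h.cases_head with h1 | ⟨c, hac, hcb⟩
  · exact absurd h1 hne
  · exact Relation.TransGen.head' hac hcb

private lemma anc_antisymm {a b : V} (h1 : Relation.ReflTransGen T.Arc a b)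
    (h2 : Relation.ReflTransGen T.Arc b a) : a = b := by
  by_contra hne
  exact T.acyclic a ((anc_transGen T h1 hne).trans (anc_transGen T h2 (Ne.symm hne)))

private lemma anc_comparable {w a b : V} (ha : Relation.ReflTransGen T.Arc a w)
    (hb : Relation.ReflTransGen T.Arc b w) :
    Relation.ReflTransGen T.Arc a b ∨ Relation.ReflTransGen T.Arc b a := by
  revert ha
  induction hb with
  | refl => exact fun ha => Or.inl ha
  | @tail c w' hbc hcw ih =>
      intro ha
      rcases ha.cases_tail with h | ⟨d, had, hdw⟩
      · subst h; exact Or.inr (hbc.tail hcw)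
      · have hdc : d = c := parent_unique T hdw hcw
        subst hdc
        exact ih had

private noncomputable def dC (v : V) : ℕ := {w | Relation.TransGen T.Arc v w}.ncard
private noncomputable def aC (v : V) : ℕ := {w | Relation.TransGen T.Arc w v}.ncard

private lemma dC_lt {u v : V} (h : Relation.TransGen T.Arc u v) : dC T v < dC T u := by
  apply Set.ncard_lt_ncard _ (Set.toFinite _)
  refine ⟨fun w hw => h.trans hw, fun hsub => T.acyclic v (hsub h)⟩

private lemma aC_lt {u v : V} (h : Relation.TransGen T.Arc u v) : aC T u < aC T v := by
  apply Set.ncard_lt_ncard _ (Set.toFinite _)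
  refine ⟨fun w hw => hw.trans h, fun hsub => T.acyclic u (hsub h)⟩

private lemma up_path {m u : V} (h : Relation.ReflTransGen T.Arc m u) :
    ∃ p : List V, p.Chain' T.Arc ∧ p.Nodup ∧ p.head? = some m ∧ p.getLast? = some u ∧
      ∀ w, w ∈ p ↔ (Relation.ReflTransGen T.Arc m w ∧ Relation.ReflTransGen T.Arc w u) := by
  induction h with
  | refl =>
      refine ⟨[m], List.isChain_singleton _, by simp, rfl, rfl, fun w => ?_⟩
      simp only [List.mem_singleton]
      constructor
      · rintro rfl; exact ⟨Relation.ReflTransGen.refl, Relation.ReflTransGen.refl⟩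
      · rintro ⟨h1, h2⟩; exact (anc_antisymm T h1 h2).symm
  | @tail c u' hmc hcu ih =>
      obtain ⟨p, hch, hnd, hhd, hlast, hmem⟩ := ih
      have hpne : p ≠ [] := by intro h0; rw [h0] at hhd; simp at hhd
      refine ⟨p ++ [u'], ?_, ?_, ?_, ?_, ?_⟩
      · refine List.isChain_append.2 ⟨hch, List.isChain_singleton _, ?_⟩
        intro x hx y hy
        rw [hlast] at hx
        simp only [Option.mem_def, Option.some_inj] at hx
        simp only [List.head?_cons, Option.mem_def, Option.some_inj] at hy
        subst hx; subst hy; exact hcu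
      · refine List.nodup_append'.2 ⟨hnd, by simp, ?_⟩
        intro w hw hw'
        simp only [List.mem_singleton] at hw'
        have h2 := (hmem w).1 hw
        rw [hw'] at h2
        exact T.acyclic u' (Relation.TransGen.tail' h2.2 hcu)
      · rcases List.exists_cons_of_ne_nil hpne with ⟨a, t, rfl⟩
        simpa using hhd
      · simp [List.getLast?_concat]
      · intro w
        simp only [List.mem_append, List.mem_singleton]
        constructor
        · rintro (hw | rfl)
          · have := (hmem w).1 hw
            exact ⟨this.1, this.2.tail hcu⟩
          · exact ⟨hmc.tail hcu, Relation.ReflTransGen.refl⟩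
        · rintro ⟨h1, h2⟩
          rcases h2.cases_tail with h3 | ⟨d, hwd, hdu'⟩
          · exact Or.inr h3.symm
          · have : d = c := parent_unique T hdu' hcu
            subst this
            exact Or.inl ((hmem w).2 ⟨h1, hwd⟩)

private lemma down_path : ∀ (n : ℕ) (u : V), dC T u ≤ n →
    ∃ p : List V, p.Chain' T.Arc ∧ p.Nodup ∧ p.head? = some u ∧
      (∃ x, p.getLast? = some x ∧ outDeg T.Arc x = 0) ∧
      ∀ w ∈ p, Relation.ReflTransGen T.Arc u w := by
  intro n
  induction n with
  | zero =>
      intro u hu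
      have hleaf : outDeg T.Arc u = 0 := by
        by_contra hne
        obtain ⟨c, hc⟩ := exists_child hne
        have := dC_lt T (Relation.TransGen.single hc)
        omega
      exact ⟨[u], List.isChain_singleton _, by simp, rfl, ⟨u, by simp, hleaf⟩,
        fun w hw => by simp only [List.mem_singleton] at hw; rw [hw]⟩
  | succ n ih =>
      intro u hu
      by_cases hleaf : outDeg T.Arc u = 0
      · exact ⟨[u], List.isChain_singleton _, by simp, rfl, ⟨u, by simp, hleaf⟩,
          fun w hw => by simp only [List.mem_singleton] at hw; rw [hw]⟩
      · obtain ⟨c, hc⟩ := exists_child hleaf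
        have hlt := dC_lt T (Relation.TransGen.single hc)
        obtain ⟨p, hch, hnd, hhd, ⟨x, hx, hx0⟩, hanc⟩ := ih c (by omega)
        have hpne : p ≠ [] := by intro h0; rw [h0] at hhd; simp at hhd
        refine ⟨u :: p, ?_, ?_, rfl, ?_, ?_⟩
        · refine List.isChain_cons.2 ⟨?_, hch⟩
          intro y hy
          rw [hhd] at hy
          simp only [Option.mem_def, Option.some_inj] at hy
          subst hy; exact hc
        · refine List.nodup_cons.2 ⟨?_, hnd⟩
          intro hu'
          exact T.acyclic u (Relation.TransGen.head' hc (hanc u hu'))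
        · refine ⟨x, ?_, hx0⟩
          rcases List.exists_cons_of_ne_nil hpne with ⟨a, t, rfl⟩
          simpa using hx
        · intro w hw
          rcases List.mem_cons.1 hw with rfl | hw'
          · exact Relation.ReflTransGen.refl
          · exact (hanc w hw').head hc

private lemma full_path {m u : V} (h : Relation.ReflTransGen T.Arc m u) :
    ∃ p : List V, IsPathIn T.Arc p ∧ p.head? = some m ∧
      (∃ x, p.getLast? = some x ∧ outDeg T.Arc x = 0) ∧
      (∀ w ∈ p, Relation.ReflTransGen T.Arc m w ∧
        (Relation.ReflTransGen T.Arc w u ∨ Relation.ReflTransGen T.Arc u w)) ∧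
      (∀ w, Relation.ReflTransGen T.Arc m w → Relation.ReflTransGen T.Arc w u → w ∈ p) := by
  obtain ⟨q, hqch, hqnd, hqhd, hqlast, hqmem⟩ := up_path T h
  obtain ⟨d, hdch, hdnd, hdhd, ⟨x, hdx, hx0⟩, hdanc⟩ := down_path T (dC T u) u le_rfl
  have hqne : q ≠ [] := by intro h0; rw [h0] at hqhd; simp at hqhd
  obtain ⟨t, rfl⟩ : ∃ t, d = u :: t := by
    cases d with
    | nil => simp at hdhd
    | cons a t =>
        simp only [List.head?_cons, Option.some_inj] at hdhd
        exact ⟨t, by rw [hdhd]⟩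
  have hut : u ∉ t := (List.nodup_cons.1 hdnd).1
  refine ⟨q ++ t, ⟨?_, ?_, ?_⟩, ?_, ?_, ?_, ?_⟩
  · simp [hqne]
  · refine List.isChain_append.2 ⟨hqch, (List.isChain_cons.1 hdch).2, ?_⟩
    intro a ha y hy
    rw [hqlast] at ha
    simp only [Option.mem_def, Option.some_inj] at ha
    subst ha
    exact (List.isChain_cons.1 hdch).1 y hy
  · refine List.nodup_append'.2 ⟨hqnd, (List.nodup_cons.1 hdnd).2, ?_⟩
    intro w hwq hwt
    have h1 := (hqmem w).1 hwq
    have h2 := hdanc w (List.mem_cons_of_mem _ hwt)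
    have : w = u := anc_antisymm T h1.2 h2
    subst this
    exact hut hwt
  · rcases List.exists_cons_of_ne_nil hqne with ⟨a, q', rfl⟩
    simpa using hqhd
  · rcases List.eq_nil_or_concat t with rfl | ⟨t', b, rfl⟩
    · refine ⟨u, by simpa using hqlast, ?_⟩
      have hxu : u = x := by
        have h' := hdx
        simp only [List.getLast?_singleton, Option.some_inj] at h'
        first | exact h' | exact h'.symm
      rw [hxu]; exact hx0
    · simp only [List.concat_eq_append] at hdx ⊢
      refine ⟨x, ?_, hx0⟩
      have h1 : (q ++ (t' ++ [b])).getLast? = some b := by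
        rw [← List.append_assoc, List.getLast?_concat]
      have h2 : (u :: (t' ++ [b])).getLast? = some b := by
        rw [← List.cons_append, List.getLast?_concat]
      rw [h2] at hdx
      rw [h1, ← Option.some_inj.1 hdx]
  · intro w hw
    rcases List.mem_append.1 hw with hwq | hwt
    · have h1 := (hqmem w).1 hwq
      exact ⟨h1.1, Or.inl h1.2⟩
    · have h2 := hdanc w (List.mem_cons_of_mem _ hwt)
      exact ⟨h.trans h2, Or.inr h2⟩
  · intro w h1 h2
    exact List.mem_append.2 (Or.inl ((hqmem w).2 ⟨h1, h2⟩))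

private lemma main_lemma : ∀ (n : ℕ) (U : Finset V), U.card ≤ n →
    ∃ P : Finset (List V),
      (∀ p ∈ P, IsPathIn T.Arc p ∧ ∃ x, p.getLast? = some x ∧ outDeg T.Arc x = 0) ∧
      PairwiseDisj P ∧
      (∀ u ∈ U, ∃! p : List V, p ∈ P ∧ u ∈ p) ∧
      (∀ p ∈ P, ∃ s ∈ U, p.head? = some s ∧ ∀ w ∈ p, Relation.ReflTransGen T.Arc s w) := by
  intro n
  induction n with
  | zero =>
      intro U hU
      have : U = ∅ := Finset.card_eq_zero.1 (le_antisymm hU (Nat.zero_le _))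
      subst this
      exact ⟨∅, by simp, fun p hp => by simp at hp, by simp, by simp⟩
  | succ n ih =>
      intro U hU
      classical
      rcases U.eq_empty_or_nonempty with rfl | hne
      · exact ⟨∅, by simp, fun p hp => by simp at hp, by simp, by simp⟩
      obtain ⟨u, hu, humin⟩ := U.exists_min_image (dC T) hne
      set C := U.filter (fun w => Relation.ReflTransGen T.Arc w u) with hCdef
      have huC : u ∈ C := Finset.mem_filter.2 ⟨hu, Relation.ReflTransGen.refl⟩
      obtain ⟨m, hmC, hmmin⟩ := C.exists_min_image (aC T) ⟨u, huC⟩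
      have hmu : Relation.ReflTransGen T.Arc m u := (Finset.mem_filter.1 hmC).2
      have hmU : m ∈ U := (Finset.mem_filter.1 hmC).1
      have hubelow : ∀ s ∈ U, Relation.ReflTransGen T.Arc u s → s = u := by
        intro s hs hus
        by_contra hne'
        have h1 := dC_lt T (anc_transGen T hus (fun h => hne' h.symm))
        have h2 := humin s hs
        omega
      have hmbelow : ∀ w ∈ C, Relation.ReflTransGen T.Arc m w := by
        intro w hwC
        have hwu : Relation.ReflTransGen T.Arc w u := (Finset.mem_filter.1 hwC).2
        rcases anc_comparable T hmu hwu with h1 | h2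
        · exact h1
        · rcases eq_or_ne w m with rfl | hne'
          · exact Relation.ReflTransGen.refl
          · have h3 := aC_lt T (anc_transGen T h2 hne')
            have h4 := hmmin w hwC
            omega
      obtain ⟨p, hpPath, hphd, hpleaf, hpmem, hpmem'⟩ := full_path T hmu
      have hCp : ∀ w ∈ C, w ∈ p := fun w hw =>
        hpmem' w (hmbelow w hw) (Finset.mem_filter.1 hw).2
      have hpU : ∀ w ∈ p, w ∈ U → w ∈ C := by
        intro w hwp hwU
        rcases (hpmem w hwp).2 with h1 | h2
        · exact Finset.mem_filter.2 ⟨hwU, h1⟩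
        · have := hubelow w hwU h2
          subst this
          exact huC
      have hcard : (U \ C).card ≤ n := by
        have h1 : (U \ C).card < U.card :=
          Finset.card_lt_card (Finset.sdiff_ssubset (Finset.filter_subset _ _) ⟨u, huC⟩)
        omega
      obtain ⟨P', hP'path, hP'disj, hP'cov, hP'inv⟩ := ih (U \ C) hcard
      have hdisj : ∀ q ∈ P', ∀ w, w ∈ q → w ∉ p := by
        intro q hq w hwq hwp
        obtain ⟨s, hsU', hshd, hsanc⟩ := hP'inv q hq
        have hsU : s ∈ U := (Finset.mem_sdiff.1 hsU').1
        have hsC : s ∉ C := (Finset.mem_sdiff.1 hsU').2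
        have hsw := hsanc w hwq
        rcases (hpmem w hwp).2 with h1 | h2
        · exact hsC (Finset.mem_filter.2 ⟨hsU, hsw.trans h1⟩)
        · rcases anc_comparable T hsw h2 with h3 | h4
          · exact hsC (Finset.mem_filter.2 ⟨hsU, h3⟩)
          · have : s = u := hubelow s hsU h4
            subst this
            exact hsC huC
      refine ⟨insert p P', ?_, ?_, ?_, ?_⟩
      · intro q hq
        rcases Finset.mem_insert.1 hq with rfl | hq'
        · exact ⟨hpPath, hpleaf⟩
        · exact hP'path q hq'
      · intro q hq r hr hqr w hwq hwr
        rcases Finset.mem_insert.1 hq with rfl | hq'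
        · rcases Finset.mem_insert.1 hr with rfl | hr'
          · exact hqr rfl
          · exact hdisj r hr' w hwr hwq
        · rcases Finset.mem_insert.1 hr with rfl | hr'
          · exact hdisj q hq' w hwq hwr
          · exact hP'disj q hq' r hr' hqr w hwq hwr
      · intro v hv
        by_cases hvC : v ∈ C
        · refine ⟨p, ⟨Finset.mem_insert_self _ _, hCp v hvC⟩, ?_⟩
          rintro r ⟨hr, hvr⟩
          rcases Finset.mem_insert.1 hr with rfl | hr'
          · rfl
          · exact absurd (hCp v hvC) (hdisj r hr' v hvr)
        · have hvU' : v ∈ U \ C := Finset.mem_sdiff.2 ⟨hv, hvC⟩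
          obtain ⟨q, ⟨hq, hvq⟩, huniq⟩ := hP'cov v hvU'
          refine ⟨q, ⟨Finset.mem_insert_of_mem hq, hvq⟩, ?_⟩
          rintro r ⟨hr, hvr⟩
          rcases Finset.mem_insert.1 hr with rfl | hr'
          · exact (hvC (hpU v hvr hv)).elim
          · exact huniq r ⟨hr', hvr⟩
      · intro q hq
        rcases Finset.mem_insert.1 hq with rfl | hq'
        · exact ⟨m, hmU, hphd, fun w hw => (hpmem w hw).1⟩
        · obtain ⟨s, hsU', hshd, hsanc⟩ := hP'inv q hq'
          exact ⟨s, (Finset.mem_sdiff.1 hsU').1, hshd, hsanc⟩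

end ProofAux

/-- In a subdivision of a rooted tree, for any nonempty vertex subset `U`
there are pairwise vertex-disjoint directed paths, each ending at a leaf,
such that each vertex of `U` lies on exactly one path. -/
theorem stmt0 {V : Type*} [Fintype V] [DecidableEq V]
    (T : RootedDirTree V) (U : Finset V) (hU : U.Nonempty) :
    ∃ P : Finset (List V),
      (∀ p ∈ P, IsPathIn T.Arc p ∧ ∃ x, p.getLast? = some x ∧ outDeg T.Arc x = 0) ∧
      PairwiseDisj P ∧
      ∀ u ∈ U, ∃! p : List V, p ∈ P ∧ u ∈ p := by
  obtain ⟨P, h1, h2, h3, _⟩ := main_lemma T U.card U le_rfl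
  exact ⟨P, h1, h2, h3⟩
end

section
/- Let N be a rooted phylogenetic network on X. If N is tree-based, then N satisfies the antichain-to-leaf property: for every antichain of k vertices of N there exist k pairwise vertex-disjoint directed paths from the elements of the antichain to leaves of N. -/
open Relation

section Aux
variable {V : Type*} [Fintype V] [DecidableEq V]

private lemma wf_of_acyclic (T : V → V → Prop) (hac : ∀ v, ¬ TransGen T v v) :
    WellFounded (fun u v => T v u) := by
  haveI : IsIrrefl V (TransGen (fun u v => T v u)) :=
    ⟨fun a hb => hac a (by rwa [← Relation.transGen_swap] at hb)⟩
  have h : WellFounded (TransGen (fun u v => T v u)) :=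
    Finite.wellFounded_of_trans_of_irrefl _
  exact @Subrelation.wf V (TransGen fun u v => T v u) (fun u v => T v u)
    (fun {x y} h => TransGen.single h) h

private lemma exists_desc_path (T : V → V → Prop) (hac : ∀ v, ¬ TransGen T v v)
    (X : Finset V) (hleaf : ∀ v, outDeg T v = 0 → v ∈ X) (v : V) :
    ∃ p : List V, p.Chain' T ∧ p.Nodup ∧ p.head? = some v ∧
      (∃ x ∈ X, p.getLast? = some x) ∧ ∀ w ∈ p, ReflTransGen T v w := by
  induction v using (wf_of_acyclic T hac).induction with
  | _ v ih =>
    by_cases h0 : outDeg T v = 0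
    · exact ⟨[v], by exact List.isChain_singleton v, by simp, rfl, ⟨v, hleaf v h0, rfl⟩,
        by simp; exact ReflTransGen.refl⟩
    · have hne : {u | T v u}.Nonempty := Set.nonempty_of_ncard_ne_zero h0
      obtain ⟨u, hu⟩ := hne
      obtain ⟨p, hc, hnd, hh, hend, hall⟩ := ih u hu
      refine ⟨v :: p, ?_, ?_, rfl, ?_, ?_⟩
      · refine List.isChain_cons.mpr ?_
        refine ⟨fun y hy => ?_, hc⟩
        rw [hh] at hy; cases hy; exact hu
      · refine List.nodup_cons.mpr ⟨fun hv => ?_, hnd⟩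
        have := hall v hv
        exact hac v ((TransGen.single hu).trans_left this)
      · obtain ⟨x, hx, hlast⟩ := hend
        refine ⟨x, hx, ?_⟩
        cases p with
        | nil => simp at hlast
        | cons a l => rw [List.getLast?_cons_cons]; exact hlast
      · intro w hw
        rcases List.mem_cons.mp hw with rfl | hw
        · exact ReflTransGen.refl
        · exact (ReflTransGen.single hu).trans (hall w hw)

private lemma anc_comparable_s6 (T : V → V → Prop) (hac : ∀ v, ¬ TransGen T v v)
    (root : V) (hroot : ∀ v, inDeg T v = 0 ↔ v = root)
    (hone : ∀ v, v ≠ root → inDeg T v = 1) :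
    ∀ v a b, ReflTransGen T a v → ReflTransGen T b v →
      ReflTransGen T a b ∨ ReflTransGen T b a := by
  have hwf : WellFounded (fun w v => T w v) := by
    haveI : IsIrrefl V (TransGen T) := ⟨hac⟩
    have h : WellFounded (TransGen T) := Finite.wellFounded_of_trans_of_irrefl _
    exact Subrelation.wf (fun {x y} h => TransGen.single h) h
  intro v
  induction v using hwf.induction with
  | _ v ih =>
    intro a b ha hb
    rcases ha.cases_tail with rfl | ⟨w, haw, hwv⟩
    · exact Or.inr hb
    rcases hb.cases_tail with rfl | ⟨w', hbw', hw'v⟩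
    · exact Or.inl ha
    have hvroot : v ≠ root := by
      intro rfl'
      have h0 : inDeg T v = 0 := (hroot v).mpr rfl'
      have : {u | T u v} = ∅ := by
        rw [← Set.ncard_eq_zero (Set.toFinite _)]; exact h0
      exact absurd hwv (by rw [Set.eq_empty_iff_forall_notMem] at this; exact this w)
    have h1 : inDeg T v = 1 := hone v hvroot
    obtain ⟨x, hx⟩ := Set.ncard_eq_one.mp h1
    have hww' : w = w' := by
      have hw : w ∈ {u | T u v} := hwv
      have hw' : w' ∈ {u | T u v} := hw'v
      rw [hx] at hw hw'
      simp at hw hw'; rw [hw, hw']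
    subst hww'
    exact ih w hwv a b haw hbw'

end Aux

/-- tree-based networks satisfy the antichain-to-leaf property. -/
theorem stmt6 {V : Type*} [Fintype V] [DecidableEq V] (N : PhyloNet V)
    (h : TreeBased N) : AntichainToLeaf N := by
  obtain ⟨T, ⟨hsub, hroot, hone⟩, hleafT⟩ := h
  have hacT : ∀ v, ¬ TransGen T v v := fun v hv =>
    N.acyclic v (TransGen.mono hsub _ _ hv)
  intro S hS
  have key := fun s => exists_desc_path T hacT N.X hleafT s
  choose f hc hnd hh hend hall using key
  refine ⟨f, fun s _ => ⟨⟨?_, ?_, hnd s⟩, hh s, hend s⟩, ?_⟩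
  · intro hnil; have := hh s; rw [hnil] at this; simp at this
  · exact (hc s).imp hsub
  · intro s hs t ht hst v hvs hvt
    have h1 := hall s v hvs
    have h2 := hall t v hvt
    rcases anc_comparable_s6 T hacT N.root hroot hone v s t h1 h2 with hcmp | hcmp <;>
    · rcases (Relation.reflTransGen_iff_eq_or_transGen.mp hcmp) with heq | htg
      · first | exact hst heq | exact hst heq.symm
      · first
        | exact hS s hs t ht hst (TransGen.mono hsub _ _ htg)
        | exact hS t ht s hs (Ne.symm hst) (TransGen.mono hsub _ _ htg)
end

section
/- Let N = (V,A) be a rooted phylogenetic network on X, let O be its set of omnians, R its set of reticulations, and B_N the bipartite graph on (O,R) with an edge {o,r} whenever (o,r) is an arc of N. Then l(N) = |O| - m(B_N), where l(N) is the minimum, over all rooted spanning trees of N with the same root as N, of the number of leaves of the spanning tree not in X, and m(B_N) is the size of a maximum matching of B_N. -/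
open Relation

/-- `l(N)`: minimum, over rooted spanning trees of `N` with the same root,
of the number of leaves of the spanning tree outside `X`. -/
noncomputable def lN {V : Type*} [Fintype V] [DecidableEq V] (N : PhyloNet V) : ℕ :=
  sInf {n | ∃ T : V → V → Prop, IsRSTree N T ∧
    {v | outDeg T v = 0 ∧ v ∉ N.X}.ncard = n}

section Aux
variable {V : Type*} [Fintype V] [DecidableEq V]

lemma no_arc_to_root (N : PhyloNet V) (u : V) : ¬ N.Arc u N.root := fun h =>
  N.acyclic N.root (Relation.TransGen.tail' (N.reach u) h)

lemma exists_parent (N : PhyloNet V) {v : V} (hv : v ≠ N.root) : ∃ u, N.Arc u v := by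
  rcases (N.reach v).cases_tail with h | ⟨c, _, hc⟩
  · exact absurd h hv
  · exact ⟨c, hc⟩

lemma ne_root_of_arc (N : PhyloNet V) {u v : V} (h : N.Arc u v) : v ≠ N.root :=
  fun hr => no_arc_to_root N u (hr ▸ h)

lemma forced_arc (N : PhyloNet V) {T : V → V → Prop} (hT : IsRSTree N T)
    {v u : V} (hA : N.Arc v u) (hu : ¬ IsRetic N u) : T v u := by
  obtain ⟨hsub, _, hone⟩ := hT
  obtain ⟨w, hw⟩ := Set.ncard_eq_one.mp (hone u (ne_root_of_arc N hA))
  have hwT : T w u := by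
    have : w ∈ ({w} : Set V) := rfl
    rwa [← hw] at this
  rcases eq_or_ne v w with h | h
  · exact h ▸ hwT
  · exfalso
    apply hu
    show 1 < inDeg N.Arc u
    unfold inDeg
    rw [Set.one_lt_ncard_iff (Set.toFinite _)]
    exact ⟨v, w, hA, hsub w u hwT, h⟩

lemma bad_is_omnian (N : PhyloNet V) {T : V → V → Prop} (hT : IsRSTree N T)
    {v : V} (h0 : outDeg T v = 0) (hx : v ∉ N.X) : IsOmnian N v := by
  refine ⟨hx, fun u hu => ?_⟩
  by_contra hnr
  have hTv := forced_arc N hT hu hnr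
  have : {u | T v u} = ∅ := Set.ncard_eq_zero (Set.toFinite _) |>.mp h0
  exact absurd hTv (by rw [← Set.mem_setOf_eq (p := fun u => T v u), this]; exact id)

lemma matching_card_le {E : V → V → Prop} {M : Finset (V × V)}
    (hM : IsMatchingOn E M) : M.card ≤ Fintype.card V := by
  have : M.card = (M.image Prod.fst).card := by
    rw [Finset.card_image_of_injOn]
    intro e he f hf hef
    exact hM.2 e he f hf (Or.inl hef)
  rw [this]
  exact Finset.card_le_univ _

lemma matching_bdd (E : V → V → Prop) :
    BddAbove {n | ∃ M : Finset (V × V), IsMatchingOn E M ∧ M.card = n} :=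
  ⟨Fintype.card V, fun n ⟨M, hM, hn⟩ => hn ▸ matching_card_le hM⟩

lemma maxMatching_mem (E : V → V → Prop) :
    ∃ M : Finset (V × V), IsMatchingOn E M ∧ M.card = maxMatching E := by
  have hne : {n | ∃ M : Finset (V × V), IsMatchingOn E M ∧ M.card = n}.Nonempty :=
    ⟨0, ∅, ⟨fun e he => absurd he (Finset.notMem_empty e),
      fun e he => absurd he (Finset.notMem_empty e)⟩, rfl⟩
  exact Nat.sSup_mem hne (matching_bdd E)

/-- Lower bound: for any rooted spanning tree, `|O| ≤ bad + m(B_N)`. -/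
lemma lower_bound (N : PhyloNet V) {T : V → V → Prop} (hT : IsRSTree N T) :
    {v | IsOmnian N v}.ncard ≤
      {v | outDeg T v = 0 ∧ v ∉ N.X}.ncard + maxMatching (BEdge N) := by
  classical
  set O1 : Set V := {v | IsOmnian N v ∧ outDeg T v ≠ 0} with hO1def
  -- choose a T-child for each vertex with a T-child
  have hchild : ∀ o ∈ O1, ∃ u, T o u := by
    intro o ho
    have := ho.2
    rcases Set.eq_empty_or_nonempty {u | T o u} with h | h
    · exact absurd (by rw [outDeg, h, Set.ncard_empty]) this
    · exact h
  choose! c hc using hchild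
  have hO1fin : O1.Finite := Set.toFinite _
  set M : Finset (V × V) := hO1fin.toFinset.image (fun o => (o, c o)) with hMdef
  have hmemM : ∀ e ∈ M, e.1 ∈ O1 ∧ e = (e.1, c e.1) := by
    intro e he
    rw [hMdef, Finset.mem_image] at he
    obtain ⟨o, ho, hoe⟩ := he
    rw [Set.Finite.mem_toFinset] at ho
    exact ⟨hoe ▸ ho, by rw [← hoe]⟩
  have hTM : ∀ e ∈ M, T e.1 e.2 := by
    intro e he
    obtain ⟨h1, h2⟩ := hmemM e he
    rw [h2]; exact hc e.1 h1
  have hmatch : IsMatchingOn (BEdge N) M := by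
    constructor
    · intro e he
      obtain ⟨h1, _⟩ := hmemM e he
      have hArc : N.Arc e.1 e.2 := hT.1 _ _ (hTM e he)
      exact ⟨h1.1, h1.1.2 e.2 hArc, hArc⟩
    · intro e he f hf hef
      obtain ⟨he1, he2⟩ := hmemM e he
      obtain ⟨hf1, hf2⟩ := hmemM f hf
      rcases hef with h | h
      · refine Prod.ext h ?_
        have e2 : e.2 = c e.1 := congrArg Prod.snd he2
        have f2 : f.2 = c f.1 := congrArg Prod.snd hf2
        rw [e2, f2, h]
      · -- e.2 = f.2 : use inDeg T e.2 = 1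
        have hr := h ▸ hTM f hf
        have hTe := hTM e he
        have hne : e.2 ≠ N.root := ne_root_of_arc N (hT.1 _ _ hTe)
        obtain ⟨w, hw⟩ := Set.ncard_eq_one.mp (hT.2.2 e.2 hne)
        have h1 : e.1 ∈ ({w} : Set V) := hw ▸ hTe
        have h2 : f.1 ∈ ({w} : Set V) := hw ▸ hr
        have : e.1 = f.1 := by
          rw [Set.mem_singleton_iff] at h1 h2; rw [h1, h2]
        exact Prod.ext this h
  have hcard : M.card = O1.ncard := by
    rw [hMdef, Finset.card_image_of_injOn (fun a _ b _ hab => (Prod.mk.injEq _ _ _ _ ▸ hab).1)]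
    exact (Set.ncard_eq_toFinset_card _ hO1fin).symm
  have hMle : M.card ≤ maxMatching (BEdge N) :=
    le_csSup (matching_bdd (BEdge N)) ⟨M, hmatch, rfl⟩
  -- O = bad ∪ O1, disjoint
  have hsplit : {v | IsOmnian N v} =
      {v | outDeg T v = 0 ∧ v ∉ N.X} ∪ O1 := by
    ext v
    simp only [Set.mem_setOf_eq, Set.mem_union, hO1def]
    constructor
    · intro h
      by_cases h0 : outDeg T v = 0
      · exact Or.inl ⟨h0, h.1⟩
      · exact Or.inr ⟨h, h0⟩
    · rintro (⟨h0, hx⟩ | h)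
      · exact bad_is_omnian N hT h0 hx
      · exact h.1
  have hdisj : Disjoint {v | outDeg T v = 0 ∧ v ∉ N.X} O1 := by
    rw [Set.disjoint_left]
    rintro v ⟨h0, _⟩ hv1
    exact hv1.2 h0
  rw [hsplit, Set.ncard_union_eq hdisj (Set.toFinite _) (Set.toFinite _)]
  omega

/-- Upper bound: there is a rooted spanning tree with at most `|O| - m(B_N)` bad leaves. -/
lemma upper_bound (N : PhyloNet V) :
    ∃ T : V → V → Prop, IsRSTree N T ∧
      {v | outDeg T v = 0 ∧ v ∉ N.X}.ncard ≤
        {v | IsOmnian N v}.ncard - maxMatching (BEdge N) := by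
  classical
  obtain ⟨M, hM, hMcard⟩ := maxMatching_mem (BEdge N)
  -- parent function
  set par : V → V := fun v =>
    if h : ∃ o, (o, v) ∈ M then h.choose
    else if h2 : ∃ u, N.Arc u v then h2.choose else v with hpardef
  have hpar : ∀ v, v ≠ N.root → N.Arc (par v) v ∧ ∀ o, (o, v) ∈ M → par v = o := by
    intro v hv
    by_cases h : ∃ o, (o, v) ∈ M
    · have hspec := h.choose_spec
      have hp : par v = h.choose := by rw [hpardef]; exact dif_pos h
      constructor
      · rw [hp]; exact (hM.1 _ hspec).2.2
      · intro o ho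
        have := hM.2 _ hspec _ ho (Or.inr rfl)
        rw [hp]
        exact congrArg Prod.fst this
    · have h2 : ∃ u, N.Arc u v := exists_parent N hv
      have hp : par v = h2.choose := by
        simp only [hpardef]; rw [dif_neg h, dif_pos h2]
      exact ⟨hp ▸ h2.choose_spec, fun o ho => absurd ⟨o, ho⟩ h⟩
  set T : V → V → Prop := fun u v => v ≠ N.root ∧ u = par v with hTdef
  have hinset : ∀ v, {u | T u v} = if v = N.root then (∅ : Set V) else {par v} := by
    intro v
    split_ifs with h
    · ext u; simp [hTdef, h]
    · ext u; simp [hTdef, h, eq_comm]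
  have hRS : IsRSTree N T := by
    refine ⟨fun u v huv => huv.2 ▸ (hpar v huv.1).1, fun v => ?_, fun v hv => ?_⟩
    · rw [inDeg, hinset v]
      split_ifs with h
      · simp [h]
      · simp [Set.ncard_singleton, h]
    · rw [inDeg, hinset v, if_neg hv, Set.ncard_singleton]
  refine ⟨T, hRS, ?_⟩
  -- bad leaves are omnians unmatched in M
  have hsub : {v | outDeg T v = 0 ∧ v ∉ N.X} ⊆
      {v | IsOmnian N v} \ ↑(M.image Prod.fst) := by
    rintro v ⟨h0, hx⟩
    refine ⟨bad_is_omnian N hRS h0 hx, ?_⟩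
    intro hmem
    rw [Finset.coe_image, Set.mem_image] at hmem
    obtain ⟨e, he, hev⟩ := hmem
    -- e = (v, r) ∈ M, r reticulation, so par r = v and T v r
    have hB := hM.1 e he
    have hrne : e.2 ≠ N.root := ne_root_of_arc N hB.2.2
    have hpe := (hpar e.2 hrne).2 e.1 (by rwa [← Prod.mk.eta (p := e)] at he)
    have hTvr : T v e.2 := ⟨hrne, by rw [hpe, hev]⟩
    have : {u | T v u} = ∅ := Set.ncard_eq_zero (Set.toFinite _) |>.mp h0
    have : e.2 ∈ ({u | T v u} : Set V) := hTvr
    rw [‹{u | T v u} = ∅›] at this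
    exact this
  have himgsub : ↑(M.image Prod.fst) ⊆ {v | IsOmnian N v} := by
    intro v hv
    rw [Finset.coe_image, Set.mem_image] at hv
    obtain ⟨e, he, hev⟩ := hv
    exact hev ▸ (hM.1 e he).1
  have himgcard : (↑(M.image Prod.fst) : Set V).ncard = maxMatching (BEdge N) := by
    rw [Set.ncard_coe_finset, Finset.card_image_of_injOn
      (fun e he f hf hef => hM.2 e he f hf (Or.inl hef)), hMcard]
  calc {v | outDeg T v = 0 ∧ v ∉ N.X}.ncard
      ≤ ({v | IsOmnian N v} \ ↑(M.image Prod.fst)).ncard :=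
        Set.ncard_le_ncard hsub (Set.toFinite _)
    _ = {v | IsOmnian N v}.ncard - maxMatching (BEdge N) := by
        rw [Set.ncard_diff himgsub (Set.toFinite _), himgcard]

end Aux

/-- `l(N) = |O| - m(B_N)`. -/
theorem stmt12 {V : Type*} [Fintype V] [DecidableEq V] (N : PhyloNet V) :
    lN N = {v | IsOmnian N v}.ncard - maxMatching (BEdge N) := by
  obtain ⟨T0, hT0, hval0⟩ := upper_bound N
  have hLne : {n | ∃ T : V → V → Prop, IsRSTree N T ∧
      {v | outDeg T v = 0 ∧ v ∉ N.X}.ncard = n}.Nonempty := ⟨_, T0, hT0, rfl⟩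
  apply le_antisymm
  · exact le_trans (Nat.sInf_le ⟨T0, hT0, rfl⟩) hval0
  · obtain ⟨T, hT, hval⟩ := Nat.sInf_mem hLne
    have := lower_bound N hT
    rw [hval] at this
    unfold lN
    omega
end
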